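/- Convergence of the scaled projected subgradient method for a fixed objective (deterministic core of Theorem 3, used as the fixed-sample step of Theorem 1): let E = ℝⁿ (n-dimensional Euclidean space), let f : E → ℝ be convex and attain its minimum over Ω. Let (x_k)_{k≥1} be a sequence with x_1 ∈ Ω and, for every k ≥ 1, x_{k+1} = P(x_k − α_k·ζ_k·q_k⁻¹·g_k), where g_k is a subgradient of f at x_k, q_k = max(1, ‖g_k‖), ζ̲ ≤ ζ_k ≤ ζ̄, and 1/k ≤ α_k ≤ C₂/k. Then there exists a point x̃ ∈ Ω with f(x̃) = min_{y ∈ Ω} f(y) such that lim_{k→∞} x_k = x̃; consequently lim_{k→∞} ‖x_{k+1} − x_k‖ = 0. -/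

import Mathlib

open scoped RealInnerProductSpace

/-- Convergence of the scaled projected subgradient method for a fixed objective. -/
theorem stmt_5 {n : ℕ}
    (Ω : Set (EuclideanSpace ℝ (Fin n))) (hΩne : Ω.Nonempty)
    (hΩclosed : IsClosed Ω) (hΩconv : Convex ℝ Ω)
    (P : EuclideanSpace ℝ (Fin n) → EuclideanSpace ℝ (Fin n))
    (hPnonexp : ∀ u v, ‖P u - P v‖ ≤ ‖u - v‖)
    (hPmem : ∀ u, P u ∈ Ω)
    (hPfix : ∀ y ∈ Ω, P y = y)
    (C₂ ζlow ζbar : ℝ) (hC₂ : 0 < C₂) (hζlow : 0 < ζlow) (hζord : ζlow ≤ ζbar)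
    (f : EuclideanSpace ℝ (Fin n) → ℝ) (hf : ConvexOn ℝ Set.univ f)
    (hattain : ∃ xstar ∈ Ω, ∀ y ∈ Ω, f xstar ≤ f y)
    (x g : ℕ → EuclideanSpace ℝ (Fin n)) (α ζ : ℕ → ℝ)
    (hx1 : x 1 ∈ Ω)
    (hg : ∀ k : ℕ, 1 ≤ k → ∀ y, f (x k) + ⟪g k, y - x k⟫ ≤ f y)
    (hζ : ∀ k : ℕ, 1 ≤ k → ζlow ≤ ζ k ∧ ζ k ≤ ζbar)
    (hα : ∀ k : ℕ, 1 ≤ k → 1 / (k : ℝ) ≤ α k ∧ α k ≤ C₂ / k)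
    (hupd : ∀ k : ℕ, 1 ≤ k →
      x (k + 1) = P (x k - (α k * ζ k * (max 1 ‖g k‖)⁻¹) • g k)) :
    (∃ xtil ∈ Ω, (∀ y ∈ Ω, f xtil ≤ f y) ∧
      Filter.Tendsto x Filter.atTop (nhds xtil)) ∧
    Filter.Tendsto (fun k => ‖x (k + 1) - x k‖) Filter.atTop (nhds 0) := by
  classical
  obtain ⟨xs, hxs, hmin⟩ := hattain
  have hcont : Continuous f := hf.locallyLipschitz.continuous
  have hζbar : 0 < ζbar := lt_of_lt_of_le hζlow hζord
  -- membership of iterates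
  have hmem : ∀ k : ℕ, 1 ≤ k → x k ∈ Ω := by
    intro k hk
    induction k with
    | zero => omega
    | succ k ih =>
      rcases Nat.lt_or_ge 1 (k+1) with h | h
      · have hk1 : 1 ≤ k := by omega
        rw [hupd k hk1]; exact hPmem _
      · have : k + 1 = 1 := by omega
        rw [this]; exact hx1
  set s : ℕ → ℝ := fun k => α k * ζ k * (max 1 ‖g k‖)⁻¹ with hsdef
  have hαpos : ∀ k : ℕ, 1 ≤ k → 0 < α k := by
    intro k hk
    have h1 : (0:ℝ) < 1 / k := by
      have : (0:ℝ) < k := by exact_mod_cast hk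
      positivity
    exact lt_of_lt_of_le h1 (hα k hk).1
  have hqpos : ∀ k : ℕ, (0:ℝ) < max 1 ‖g k‖ := fun k => lt_of_lt_of_le one_pos (le_max_left _ _)
  have hspos : ∀ k : ℕ, 1 ≤ k → 0 < s k := by
    intro k hk
    have := hαpos k hk
    have h2 : 0 < ζ k := lt_of_lt_of_le hζlow (hζ k hk).1
    have h3 := hqpos k
    positivity
  set D : ℝ := (C₂ * ζbar)^2 with hDdef
  have hDpos : 0 < D := by positivity
  set c : ℕ → ℝ := fun k => D / (k:ℝ)^2 with hcdef
  have hcnonneg : ∀ k, 0 ≤ c k := by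
    intro k; simp only [hcdef]; positivity
  have hcsum : Summable c := by
    have h1 : Summable (fun k : ℕ => 1 / (k:ℝ)^2) := Real.summable_one_div_nat_pow.2 one_lt_two
    have := h1.mul_left D
    convert this using 2 with k
    · rfl
    simp [hcdef]; ring
  -- the key one-step inequality
  have key : ∀ k : ℕ, 1 ≤ k → ∀ z ∈ Ω,
      ‖x (k+1) - z‖^2 ≤ ‖x k - z‖^2 - 2 * s k * (f (x k) - f z) + c k := by
    intro k hk z hz
    have h1 : ‖x (k+1) - z‖ ≤ ‖(x k - z) - s k • g k‖ := by
      rw [hupd k hk]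
      calc ‖P (x k - s k • g k) - z‖ = ‖P (x k - s k • g k) - P z‖ := by rw [hPfix z hz]
        _ ≤ ‖(x k - s k • g k) - z‖ := hPnonexp _ _
        _ = ‖(x k - z) - s k • g k‖ := by congr 1; abel
    have h1' : ‖x (k+1) - z‖^2 ≤ ‖(x k - z) - s k • g k‖^2 :=
      pow_le_pow_left₀ (norm_nonneg _) h1 2
    have h2 : ‖(x k - z) - s k • g k‖^2
        = ‖x k - z‖^2 - 2 * s k * ⟪g k, x k - z⟫ + s k^2 * ‖g k‖^2 := by
      rw [norm_sub_sq_real, real_inner_smul_right, norm_smul, real_inner_comm]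
      rw [mul_pow]
      simp [sq_abs]
      ring
    have h3 : f (x k) - f z ≤ ⟪g k, x k - z⟫ := by
      have hgz := hg k hk z
      have heq : ⟪g k, z - x k⟫ = -⟪g k, x k - z⟫ := by
        rw [← inner_neg_right]; congr 1; abel
      rw [heq] at hgz
      linarith
    have h4 : s k^2 * ‖g k‖^2 ≤ c k := by
      have hsg : s k * ‖g k‖ ≤ α k * ζ k := by
        have hle : (max 1 ‖g k‖)⁻¹ * ‖g k‖ ≤ 1 := by
          rw [inv_mul_le_iff₀ (hqpos k), mul_one]
          exact le_max_right _ _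
        have hαζ : 0 ≤ α k * ζ k :=
          mul_nonneg (hαpos k hk).le (le_of_lt (lt_of_lt_of_le hζlow (hζ k hk).1))
        calc s k * ‖g k‖ = (α k * ζ k) * ((max 1 ‖g k‖)⁻¹ * ‖g k‖) := by ring
          _ ≤ (α k * ζ k) * 1 := by exact mul_le_mul_of_nonneg_left hle hαζ
          _ = α k * ζ k := mul_one _
      have hαζk : α k * ζ k ≤ C₂ * ζbar / k := by
        have hα2 := (hα k hk).2
        have hζ2 := (hζ k hk).2
        have hζpos : 0 ≤ ζ k := le_of_lt (lt_of_lt_of_le hζlow (hζ k hk).1)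
        have hkpos : (0:ℝ) < k := by exact_mod_cast hk
        calc α k * ζ k ≤ (C₂ / k) * ζbar := by
              apply mul_le_mul hα2 hζ2 hζpos
              positivity
          _ = C₂ * ζbar / k := by ring
      have hnn : 0 ≤ s k * ‖g k‖ := mul_nonneg (hspos k hk).le (norm_nonneg _)
      have h5 : (s k * ‖g k‖)^2 ≤ (C₂ * ζbar / k)^2 := by
        apply pow_le_pow_left₀ hnn (le_trans hsg hαζk)
      calc s k^2 * ‖g k‖^2 = (s k * ‖g k‖)^2 := by ring
        _ ≤ (C₂ * ζbar / k)^2 := h5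
        _ = c k := by simp [hcdef, hDdef, div_pow]
    have h6 : 2 * s k * (f (x k) - f z) ≤ 2 * s k * ⟪g k, x k - z⟫ := by
      apply mul_le_mul_of_nonneg_left h3
      have := hspos k hk; linarith
    linarith [h1', h2 ▸ h1']
  -- monotone bound with partial sums, for any minimizer z
  have hbound : ∀ z ∈ Ω, (∀ y ∈ Ω, f z ≤ f y) → ∀ m, 1 ≤ m → ∀ k, m ≤ k →
      ‖x k - z‖^2 ≤ ‖x m - z‖^2 +
        (∑ j ∈ Finset.range k, c j - ∑ j ∈ Finset.range m, c j) := by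
    intro z hz hzmin m hm k hk
    induction k with
    | zero => omega
    | succ k ih =>
      rcases eq_or_lt_of_le hk with h | h
      · rw [← h]; simp
      · have hk' : m ≤ k := by omega
        have h1k : 1 ≤ k := le_trans hm hk'
        have hkey := key k h1k z hz
        have hnn : 0 ≤ 2 * s k * (f (x k) - f z) := by
          have := (hspos k h1k).le
          have := sub_nonneg.2 (hzmin _ (hmem k h1k))
          positivity
        have hsum : ∑ j ∈ Finset.range (k+1), c j = ∑ j ∈ Finset.range k, c j + c k :=
          Finset.sum_range_succ _ _
        have hih := ih hk'
        rw [hsum]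
        linarith
  set S : ℝ := ∑' j, c j with hSdef
  have hpart : ∀ m, ∑ j ∈ Finset.range m, c j ≤ S :=
    fun m => hcsum.sum_le_tsum _ (fun j _ => hcnonneg j)
  have hpartnn : ∀ m, 0 ≤ ∑ j ∈ Finset.range m, c j :=
    fun m => Finset.sum_nonneg fun j _ => hcnonneg j
  -- boundedness of iterates
  have hA : ∀ k, 1 ≤ k → ‖x k - xs‖^2 ≤ ‖x 1 - xs‖^2 + S := by
    intro k hk
    have := hbound xs hxs hmin 1 le_rfl k hk
    have h1 := hpart k
    have h2 := hpartnn 1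
    linarith
  set R : ℝ := Real.sqrt (‖x 1 - xs‖^2 + S) with hRdef
  have hRnn : 0 ≤ R := Real.sqrt_nonneg _
  have hR : ∀ k, 1 ≤ k → ‖x k - xs‖ ≤ R := by
    intro k hk
    have h := hA k hk
    calc ‖x k - xs‖ = Real.sqrt (‖x k - xs‖^2) := (Real.sqrt_sq (norm_nonneg _)).symm
      _ ≤ R := Real.sqrt_le_sqrt h
  -- bound on subgradients
  obtain ⟨pM, hpMmem, hpM⟩ := (isCompact_closedBall xs (R+1)).exists_isMaxOn
    ⟨xs, by simp [Metric.mem_closedBall]; linarith⟩ hcont.continuousOn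
  obtain ⟨pm, hpmmem, hpm⟩ := (isCompact_closedBall xs (R+1)).exists_isMinOn
    ⟨xs, by simp [Metric.mem_closedBall]; linarith⟩ hcont.continuousOn
  set G : ℝ := max 1 (f pM - f pm) with hGdef
  have hG1 : 1 ≤ G := le_max_left _ _
  have hGpos : 0 < G := lt_of_lt_of_le one_pos hG1
  have hxball : ∀ k, 1 ≤ k → x k ∈ Metric.closedBall xs (R+1) := by
    intro k hk
    rw [Metric.mem_closedBall, dist_eq_norm]
    have := hR k hk; linarith
  have hGbound : ∀ k, 1 ≤ k → ‖g k‖ ≤ G := by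
    intro k hk
    rcases eq_or_ne (g k) 0 with h0 | h0
    · rw [h0, norm_zero]; linarith
    · set u := ‖g k‖⁻¹ • g k with hudef
      have hgn : (0:ℝ) < ‖g k‖ := norm_pos_iff.2 h0
      have hun : ‖u‖ = 1 := by
        rw [hudef, norm_smul, norm_inv, norm_norm, inv_mul_cancel₀ hgn.ne']
      have hyb : x k + u ∈ Metric.closedBall xs (R+1) := by
        rw [Metric.mem_closedBall, dist_eq_norm]
        have h1 : x k + u - xs = (x k - xs) + u := by abel
        rw [h1]
        calc ‖(x k - xs) + u‖ ≤ ‖x k - xs‖ + ‖u‖ := norm_add_le _ _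
          _ ≤ R + 1 := by rw [hun]; have := hR k hk; linarith
      have hsub := hg k hk (x k + u)
      have hinner : ⟪g k, (x k + u) - x k⟫ = ‖g k‖ := by
        have h1 : (x k + u) - x k = u := by abel
        rw [h1, hudef, real_inner_smul_right, real_inner_self_eq_norm_sq]
        field_simp
      rw [hinner] at hsub
      have hfy : f (x k + u) ≤ f pM := hpM hyb
      have hfx : f pm ≤ f (x k) := hpm (hxball k hk)
      have : ‖g k‖ ≤ f pM - f pm := by linarith
      exact le_trans this (le_max_right _ _)
  -- lower bound on s
  have hslow : ∀ k, 1 ≤ k → ζlow * G⁻¹ / k ≤ s k := by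
    intro k hk
    have hkpos : (0:ℝ) < k := by exact_mod_cast hk
    have hq : max 1 ‖g k‖ ≤ G := max_le hG1 (hGbound k hk)
    have hqinv : G⁻¹ ≤ (max 1 ‖g k‖)⁻¹ := inv_anti₀ (hqpos k) hq
    have hα1 := (hα k hk).1
    have hζ1 := (hζ k hk).1
    calc ζlow * G⁻¹ / k = (1/k) * ζlow * G⁻¹ := by ring
      _ ≤ α k * ζ k * (max 1 ‖g k‖)⁻¹ := by
          apply mul_le_mul
          · apply mul_le_mul hα1 hζ1 hζlow.le (hαpos k hk).le
          · exact hqinv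
          · positivity
          · exact mul_nonneg (hαpos k hk).le (le_trans hζlow.le hζ1)
      _ = s k := rfl
  -- b series : summable
  set b : ℕ → ℝ := fun k => if 1 ≤ k then 2 * s k * (f (x k) - f xs) else 0 with hbdef
  have hbnn : ∀ k, 0 ≤ b k := by
    intro k
    simp only [hbdef]
    split
    · rename_i hk
      have := (hspos k hk).le
      have := sub_nonneg.2 (hmin _ (hmem k hk))
      positivity
    · exact le_rfl
  have hbsumbd : ∀ K, ∑ j ∈ Finset.range K, b j ≤ ‖x 1 - xs‖^2 + S := by
    intro K
    have hclaim : ∀ K, 1 ≤ K → ∑ j ∈ Finset.range K, b j + ‖x K - xs‖^2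
        ≤ ‖x 1 - xs‖^2 + ∑ j ∈ Finset.range K, c j := by
      intro K hK
      induction K with
      | zero => omega
      | succ K ih =>
        rcases Nat.lt_or_ge 1 (K+1) with h | h
        · have hK1 : 1 ≤ K := by omega
          have hih := ih hK1
          have hkey := key K hK1 xs hxs
          rw [Finset.sum_range_succ, Finset.sum_range_succ]
          have hbK : b K = 2 * s K * (f (x K) - f xs) := by simp [hbdef, hK1]
          rw [hbK]
          linarith
        · have : K + 1 = 1 := by omega
          rw [this]
          simpa [hbdef] using hcnonneg 0
    rcases Nat.eq_zero_or_pos K with h | h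
    · subst h
      simp only [Finset.range_zero, Finset.sum_empty]
      have h2 : (0:ℝ) ≤ ‖x 1 - xs‖^2 := by positivity
      have hSnn : (0:ℝ) ≤ S := le_trans (hpartnn 0) (hpart 0)
      linarith
    · have := hclaim K h
      have h1 := hpart K
      have h2 : 0 ≤ ‖x K - xs‖^2 := by positivity
      linarith
  have hbsum : Summable b := summable_of_sum_range_le hbnn hbsumbd
  -- frequently small objective values
  have hfreq : ∀ ε : ℝ, 0 < ε → ∀ N : ℕ, ∃ k, N ≤ k ∧ 1 ≤ k ∧ f (x k) < f xs + ε := by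
    intro ε hε N
    by_contra hcon
    push_neg at hcon
    set M : ℕ := max N 1 with hMdef
    have hlower : ∀ j : ℕ, (2 * ζlow * G⁻¹ * ε) / ((j:ℝ) + M) ≤ b (j + M) := by
      intro j
      have hjM1 : 1 ≤ j + M := le_trans (le_max_right N 1) (Nat.le_add_left M j)
      have hjMN : N ≤ j + M := le_trans (le_max_left N 1) (Nat.le_add_left M j)
      have hfb := hcon (j + M) hjMN hjM1
      have hsl := hslow (j + M) hjM1
      have hkpos : (0:ℝ) < (j:ℝ) + M := by
        have : (0:ℝ) < ((j + M : ℕ):ℝ) := by exact_mod_cast hjM1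
        push_cast at this ⊢; linarith
      have hbeq : b (j + M) = 2 * s (j + M) * (f (x (j + M)) - f xs) := by
        simp [hbdef, hjM1]
      rw [hbeq]
      have hcast : ((j + M : ℕ):ℝ) = (j:ℝ) + M := by push_cast; ring
      rw [hcast] at hsl
      have hspos' : 0 < s (j + M) := hspos _ hjM1
      have hεle : ε ≤ f (x (j + M)) - f xs := by linarith
      calc (2 * ζlow * G⁻¹ * ε) / ((j:ℝ) + M)
          = 2 * (ζlow * G⁻¹ / ((j:ℝ) + M)) * ε := by ring
        _ ≤ 2 * s (j + M) * ε := by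
            apply mul_le_mul_of_nonneg_right _ hε.le
            linarith
        _ ≤ 2 * s (j + M) * (f (x (j + M)) - f xs) := by
            apply mul_le_mul_of_nonneg_left hεle
            linarith
    have hsumshift : Summable (fun j => b (j + M)) := (summable_nat_add_iff M).2 hbsum
    have hsum2 : Summable (fun j : ℕ => (2 * ζlow * G⁻¹ * ε) / ((j:ℝ) + M)) := by
      apply Summable.of_nonneg_of_le _ hlower hsumshift
      intro j
      have hkpos : (0:ℝ) ≤ (j:ℝ) + M := by positivity
      positivity
    have hcpos : 0 < 2 * ζlow * G⁻¹ * ε := by positivity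
    have hsum3 : Summable (fun j : ℕ => 1 / ((j:ℝ) + M)) := by
      have h := hsum2.mul_left (2 * ζlow * G⁻¹ * ε)⁻¹
      have heq : (fun j : ℕ => 1 / ((j:ℝ) + M))
          = fun j : ℕ => (2 * ζlow * G⁻¹ * ε)⁻¹ * ((2 * ζlow * G⁻¹ * ε) / ((j:ℝ) + M)) := by
        funext j
        rw [← mul_div_assoc, inv_mul_cancel₀ hcpos.ne']
      rw [heq]; exact h
    have h4 : Summable (fun j : ℕ => 1 / ((j + M : ℕ) : ℝ)) := by
      have heq : (fun j : ℕ => 1 / ((j + M : ℕ) : ℝ)) = fun j : ℕ => 1 / ((j:ℝ) + M) := by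
        funext j; push_cast; ring
      rw [heq]; exact hsum3
    exact Real.not_summable_one_div_natCast ((summable_nat_add_iff M).1 h4)
  -- extract subsequence converging to a minimizer
  have hexist : ∀ j : ℕ, ∃ k, (j+1) ≤ k ∧ 1 ≤ k ∧ f (x k) < f xs + 1/((j:ℝ)+1) := by
    intro j
    apply hfreq
    positivity
  choose K hK1 hK2 hK3 using hexist
  have hKball : ∀ j, x (K j) ∈ Metric.closedBall xs (R+1) := fun j => hxball _ (hK2 j)
  obtain ⟨xtil, hxtilball, φ, hφmono, hφtend⟩ :=
    (isCompact_closedBall xs (R+1)).tendsto_subseq hKball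
  have hxtilΩ : xtil ∈ Ω :=
    hΩclosed.mem_of_tendsto hφtend (Filter.Eventually.of_forall fun j => hmem _ (hK2 _))
  have hftend : Filter.Tendsto (fun j => f (x (K (φ j)))) Filter.atTop (nhds (f xtil)) :=
    (hcont.tendsto xtil).comp hφtend
  have hφatTop : Filter.Tendsto φ Filter.atTop Filter.atTop := hφmono.tendsto_atTop
  have hinvtend : Filter.Tendsto (fun j => f xs + 1/((φ j : ℝ)+1)) Filter.atTop
      (nhds (f xs + 0)) := by
    apply Filter.Tendsto.const_add
    exact tendsto_one_div_add_atTop_nhds_zero_nat.comp hφatTop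
  have hfxtil : f xtil ≤ f xs := by
    have := le_of_tendsto_of_tendsto' hftend hinvtend
      (fun j => (hK3 (φ j)).le)
    simpa using this
  have hxtilmin : ∀ y ∈ Ω, f xtil ≤ f y := fun y hy => le_trans hfxtil (hmin y hy)
  -- convergence of the whole sequence to xtil
  have hpartsum : Filter.Tendsto (fun m => ∑ j ∈ Finset.range m, c j) Filter.atTop (nhds S) :=
    hcsum.hasSum.tendsto_sum_nat
  have htendx : Filter.Tendsto x Filter.atTop (nhds xtil) := by
    rw [Metric.tendsto_atTop]
    intro ε hε
    have hε2 : (0:ℝ) < ε^2/4 := by positivity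
    obtain ⟨M₁, hM₁⟩ := (Metric.tendsto_atTop.1 hpartsum) (ε^2/4) hε2
    obtain ⟨J₁, hJ₁⟩ := (Metric.tendsto_atTop.1 hφtend) (ε/2) (by positivity)
    set j := max J₁ M₁ with hjdef
    set m := K (φ j) with hmdef
    have hjJ : J₁ ≤ j := le_max_left _ _
    have hm1 : 1 ≤ m := hK2 _
    have hmM₁ : M₁ ≤ m := by
      have h1 : M₁ ≤ j := le_max_right _ _
      have h2 : j ≤ φ j := hφmono.le_apply
      have h3 : φ j + 1 ≤ m := hK1 (φ j)
      omega
    have hdistm : ‖x m - xtil‖ < ε/2 := by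
      have := hJ₁ j hjJ
      rwa [Function.comp_apply, dist_eq_norm] at this
    refine ⟨m, fun k hk => ?_⟩
    rw [dist_eq_norm]
    have hb := hbound xtil hxtilΩ hxtilmin m hm1 k hk
    have htail : ∑ j ∈ Finset.range k, c j - ∑ j ∈ Finset.range m, c j < ε^2/4 := by
      have h1 := hpart k
      have h2 := hM₁ m hmM₁
      rw [Real.dist_eq] at h2
      have h3 : S - ∑ j ∈ Finset.range m, c j < ε^2/4 := lt_of_le_of_lt (le_abs_self _) (by
        rwa [abs_sub_comm] at h2)
      linarith
    have hsq : ‖x k - xtil‖^2 < ε^2 := by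
      have hm2 : ‖x m - xtil‖^2 < (ε/2)^2 := by
        apply pow_lt_pow_left₀ hdistm (norm_nonneg _)
        norm_num
      have : (ε/2)^2 = ε^2/4 := by ring
      rw [this] at hm2
      linarith
    exact lt_of_pow_lt_pow_left₀ 2 hε.le hsq
  refine ⟨⟨xtil, hxtilΩ, hxtilmin, htendx⟩, ?_⟩
  have h1 : Filter.Tendsto (fun k => x (k+1)) Filter.atTop (nhds xtil) :=
    htendx.comp (Filter.tendsto_add_atTop_nat 1)
  have h2 : Filter.Tendsto (fun k => x (k+1) - x k) Filter.atTop (nhds (xtil - xtil)) :=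
    h1.sub htendx
  rw [sub_self] at h2
  have h3 := h2.norm
  rwa [norm_zero] at h3
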